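/- arXiv:2309.00247 — 8 statements merged into one kernel-verified Lean document; each statement's English description precedes it below -/
import Mathlib

section
/- Let G be a finite nilpotent group whose order is divisible by at least three distinct primes. Then the power graph P(G) contains an induced path on 5 vertices. -/
def powerGraph (G : Type*) [Group G] : SimpleGraph G where
  Adj u v := u ≠ v ∧ (u ∈ Subgroup.zpowers v ∨ v ∈ Subgroup.zpowers u)
  symm := by
    constructor
    rintro u v ⟨h1, h2⟩
    exact ⟨h1.symm, h2.symm⟩
  loopless := by
    constructor
    rintro v ⟨h1, _⟩
    exact h1 rfl

/-- `Γ` contains an induced path on 5 vertices. -/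
def HasInducedP5 {V : Type*} (Γ : SimpleGraph V) : Prop :=
  ∃ a b c d e : V,
    a ≠ b ∧ a ≠ c ∧ a ≠ d ∧ a ≠ e ∧ b ≠ c ∧ b ≠ d ∧ b ≠ e ∧ c ≠ d ∧ c ≠ e ∧ d ≠ e ∧
    Γ.Adj a b ∧ Γ.Adj b c ∧ Γ.Adj c d ∧ Γ.Adj d e ∧
    ¬Γ.Adj a c ∧ ¬Γ.Adj a d ∧ ¬Γ.Adj a e ∧ ¬Γ.Adj b d ∧ ¬Γ.Adj b e ∧ ¬Γ.Adj c e

/-- `Γ` contains an induced copy of `P₂ ∪ P₃`. -/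
def HasInducedP2UnionP3 {V : Type*} (Γ : SimpleGraph V) : Prop :=
  ∃ a b c d e : V,
    a ≠ b ∧ a ≠ c ∧ a ≠ d ∧ a ≠ e ∧ b ≠ c ∧ b ≠ d ∧ b ≠ e ∧ c ≠ d ∧ c ≠ e ∧ d ≠ e ∧
    Γ.Adj a b ∧ Γ.Adj c d ∧ Γ.Adj d e ∧
    ¬Γ.Adj a c ∧ ¬Γ.Adj a d ∧ ¬Γ.Adj a e ∧ ¬Γ.Adj b c ∧ ¬Γ.Adj b d ∧ ¬Γ.Adj b e ∧ ¬Γ.Adj c e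

/-- `Γ` contains an induced diamond (`K₄` minus an edge). -/
def HasInducedDiamond {V : Type*} (Γ : SimpleGraph V) : Prop :=
  ∃ a b c d : V,
    a ≠ b ∧ a ≠ c ∧ a ≠ d ∧ b ≠ c ∧ b ≠ d ∧ c ≠ d ∧
    Γ.Adj a b ∧ Γ.Adj a c ∧ Γ.Adj b c ∧ Γ.Adj b d ∧ Γ.Adj c d ∧ ¬Γ.Adj a d


section p5helpers
variable {G : Type*} [Group G]

private lemma my_mem_zpowers_mul {u v : G} {n : ℕ} (h : Commute u v) (hv : v ^ n = 1)
    (hco : Nat.Coprime n (orderOf u)) : u ∈ Subgroup.zpowers (u * v) := by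
  obtain ⟨m, hm⟩ := exists_pow_eq_self_of_coprime hco
  refine ⟨((n * m : ℕ) : ℤ), ?_⟩
  show (u * v) ^ ((n * m : ℕ) : ℤ) = u
  rw [zpow_natCast, pow_mul, h.mul_pow, hv, mul_one, hm]

private lemma my_commute_of_orders [Finite G] [Group.IsNilpotent G] {x y : G} {p q : ℕ}
    (hp : p.Prime) (hq : q.Prime) (hpq : p ≠ q) (hx : orderOf x = p) (hy : orderOf y = q) :
    Commute x y := by
  haveI : Fact p.Prime := ⟨hp⟩
  haveI : Fact q.Prime := ⟨hq⟩
  have hxP : IsPGroup p (Subgroup.zpowers x) :=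
    IsPGroup.of_card (by rw [Nat.card_zpowers, hx, pow_one])
  have hyQ : IsPGroup q (Subgroup.zpowers y) :=
    IsPGroup.of_card (by rw [Nat.card_zpowers, hy, pow_one])
  obtain ⟨P, hP⟩ := hxP.exists_le_sylow
  obtain ⟨Q, hQ⟩ := hyQ.exists_le_sylow
  have hnc := normalizerCondition_of_isNilpotent (G := G)
  have hPn : (P : Subgroup G).Normal := Sylow.normal_of_normalizerCondition hnc P
  have hQn : (Q : Subgroup G).Normal := Sylow.normal_of_normalizerCondition hnc Q
  have hdis : Disjoint (P : Subgroup G) (Q : Subgroup G) :=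
    IsPGroup.disjoint_of_ne p q hpq _ _ P.isPGroup' Q.isPGroup'
  exact Subgroup.commute_of_normal_of_disjoint _ _ hPn hQn hdis x y
    (hP (Subgroup.mem_zpowers x)) (hQ (Subgroup.mem_zpowers y))

private lemma my_nonadj {u v : G} (h1 : ¬ orderOf u ∣ orderOf v)
    (h2 : ¬ orderOf v ∣ orderOf u) : ¬ (powerGraph G).Adj u v := by
  rintro ⟨-, h | h⟩
  · exact h1 (orderOf_dvd_of_mem_zpowers h)
  · exact h2 (orderOf_dvd_of_mem_zpowers h)

private lemma my_ne_of_orderOf {u v : G} (h : orderOf u ≠ orderOf v) : u ≠ v :=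
  fun h' => h (by rw [h'])

end p5helpers

theorem nilpotent_three_primes_hasInducedP5 (G : Type*) [Group G] [Finite G]
    [Group.IsNilpotent G] (p q r : ℕ) (hp : p.Prime) (hq : q.Prime) (hr : r.Prime)
    (hpq : p ≠ q) (hpr : p ≠ r) (hqr : q ≠ r)
    (hdvd : p ∣ Nat.card G ∧ q ∣ Nat.card G ∧ r ∣ Nat.card G) :
    HasInducedP5 (powerGraph G) := by
  obtain ⟨hpd, hqd, hrd⟩ := hdvd
  haveI : Fact p.Prime := ⟨hp⟩
  haveI : Fact q.Prime := ⟨hq⟩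
  haveI : Fact r.Prime := ⟨hr⟩
  obtain ⟨x, hx⟩ := exists_prime_orderOf_dvd_card' p hpd
  obtain ⟨y, hy⟩ := exists_prime_orderOf_dvd_card' q hqd
  obtain ⟨z, hz⟩ := exists_prime_orderOf_dvd_card' r hrd
  have hxy : Commute x y := my_commute_of_orders hp hq hpq hx hy
  have hyz : Commute y z := my_commute_of_orders hq hr hqr hy hz
  have cpq : Nat.Coprime p q := (Nat.coprime_primes hp hq).mpr hpq
  have cqr : Nat.Coprime q r := (Nat.coprime_primes hq hr).mpr hqr
  have hb : orderOf (x * y) = p * q := by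
    rw [hxy.orderOf_mul_eq_mul_orderOf_of_coprime (by rw [hx, hy]; exact cpq), hx, hy]
  have hd : orderOf (y * z) = q * r := by
    rw [hyz.orderOf_mul_eq_mul_orderOf_of_coprime (by rw [hy, hz]; exact cqr), hy, hz]
  have dpq : ∀ {a b : ℕ}, a.Prime → b.Prime → a ≠ b → ¬ a ∣ b :=
    fun ha hb hab h => hab ((Nat.prime_dvd_prime_iff_eq ha hb).mp h)
  -- membership facts
  have mab : x ∈ Subgroup.zpowers (x * y) :=
    my_mem_zpowers_mul (n := q) hxy (by rw [← hy]; exact pow_orderOf_eq_one y)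
      (by rw [hx]; exact cpq.symm)
  have mcb : y ∈ Subgroup.zpowers (x * y) := by
    have h := my_mem_zpowers_mul (n := p) hxy.symm (by rw [← hx]; exact pow_orderOf_eq_one x)
      (by rw [hy]; exact cpq)
    rwa [← hxy.eq] at h
  have mcd : y ∈ Subgroup.zpowers (y * z) :=
    my_mem_zpowers_mul (n := r) hyz (by rw [← hz]; exact pow_orderOf_eq_one z)
      (by rw [hy]; exact cqr.symm)
  have med : z ∈ Subgroup.zpowers (y * z) := by
    have h := my_mem_zpowers_mul (n := q) hyz.symm (by rw [← hy]; exact pow_orderOf_eq_one y)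
      (by rw [hz]; exact cqr)
    rwa [← hyz.eq] at h
  -- numeric distinctness of orders
  have np_pq : p ≠ p * q := by nlinarith [hp.two_le, hq.two_le]
  have np_qr : p ≠ q * r := fun h =>
    hpq ((Nat.prime_dvd_prime_iff_eq hq hp).mp (by rw [h]; exact dvd_mul_right q r)).symm
  have npq_q : p * q ≠ q := by nlinarith [hp.two_le, hq.two_le]
  have npq_qr : p * q ≠ q * r := fun h =>
    hpr (Nat.eq_of_mul_eq_mul_right hq.pos (h.trans (mul_comm q r)))
  have npq_r : p * q ≠ r := fun h =>
    hpr ((Nat.prime_dvd_prime_iff_eq hp hr).mp (by rw [← h]; exact dvd_mul_right p q))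
  have nq_qr : q ≠ q * r := by nlinarith [hq.two_le, hr.two_le]
  have nqr_r : q * r ≠ r := by nlinarith [hq.two_le, hr.two_le]
  refine ⟨x, x * y, y, y * z, z, ?_, ?_, ?_, ?_, ?_, ?_, ?_, ?_, ?_, ?_, ?_, ?_, ?_, ?_,
    ?_, ?_, ?_, ?_, ?_, ?_⟩
  -- distinctness
  · exact my_ne_of_orderOf (by rw [hx, hb]; exact np_pq)
  · exact my_ne_of_orderOf (by rw [hx, hy]; exact hpq)
  · exact my_ne_of_orderOf (by rw [hx, hd]; exact np_qr)
  · exact my_ne_of_orderOf (by rw [hx, hz]; exact hpr)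
  · exact my_ne_of_orderOf (by rw [hb, hy]; exact npq_q)
  · exact my_ne_of_orderOf (by rw [hb, hd]; exact npq_qr)
  · exact my_ne_of_orderOf (by rw [hb, hz]; exact npq_r)
  · exact my_ne_of_orderOf (by rw [hy, hd]; exact nq_qr)
  · exact my_ne_of_orderOf (by rw [hy, hz]; exact hqr)
  · exact my_ne_of_orderOf (by rw [hd, hz]; exact nqr_r)
  -- adjacencies
  · exact ⟨my_ne_of_orderOf (by rw [hx, hb]; exact np_pq), Or.inl mab⟩
  · exact ⟨my_ne_of_orderOf (by rw [hb, hy]; exact npq_q), Or.inr mcb⟩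
  · exact ⟨my_ne_of_orderOf (by rw [hy, hd]; exact nq_qr), Or.inl mcd⟩
  · exact ⟨(my_ne_of_orderOf (by rw [hd, hz]; exact nqr_r)), Or.inr med⟩
  -- non-adjacencies
  · exact my_nonadj (by rw [hx, hy]; exact dpq hp hq hpq)
      (by rw [hx, hy]; exact dpq hq hp hpq.symm)
  · refine my_nonadj ?_ ?_
    · rw [hx, hd]
      exact fun h => (hp.dvd_mul.mp h).elim (dpq hp hq hpq) (dpq hp hr hpr)
    · rw [hx, hd]
      exact fun h => dpq hq hp hpq.symm ((dvd_mul_right q r).trans h)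
  · exact my_nonadj (by rw [hx, hz]; exact dpq hp hr hpr)
      (by rw [hx, hz]; exact dpq hr hp hpr.symm)
  · refine my_nonadj ?_ ?_
    · rw [hb, hd]
      exact fun h => (hp.dvd_mul.mp ((dvd_mul_right p q).trans h)).elim
        (dpq hp hq hpq) (dpq hp hr hpr)
    · rw [hb, hd]
      exact fun h => (hr.dvd_mul.mp ((dvd_mul_left r q).trans h)).elim
        (dpq hr hp hpr.symm) (dpq hr hq hqr.symm)
  · refine my_nonadj ?_ ?_
    · rw [hb, hz]
      exact fun h => dpq hp hr hpr ((dvd_mul_right p q).trans h)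
    · rw [hb, hz]
      exact fun h => (hr.dvd_mul.mp h).elim (dpq hr hp hpr.symm) (dpq hr hq hqr.symm)
  · exact my_nonadj (by rw [hy, hz]; exact dpq hq hr hqr)
      (by rw [hy, hz]; exact dpq hr hq hqr.symm)
end

section
/- Let G be a finite nilpotent group of order p^a q^b with p, q distinct primes and a, b ≥ 1, whose Sylow p-subgroup is non-cyclic. Then the power graph P(G) contains an induced path on 5 vertices. -/
section Aux

variable {G : Type*} [Group G]

/-- A finite non-cyclic group contains two elements, neither a power of the other. -/
lemma exists_incomparable_of_not_isCyclic [Finite G] (h : ¬ IsCyclic G) :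
    ∃ x y : G, x ∉ Subgroup.zpowers y ∧ y ∉ Subgroup.zpowers x := by
  by_contra hc
  push_neg at hc
  obtain ⟨g, hg⟩ := Finite.exists_max (orderOf : G → ℕ)
  apply h
  refine ⟨⟨g, fun y => ?_⟩⟩
  by_cases hy : y ∈ Subgroup.zpowers g
  · exact hy
  · have hgy : g ∈ Subgroup.zpowers y := hc y g hy
    have hd : orderOf g ∣ orderOf y := orderOf_dvd_of_mem_zpowers hgy
    have hpos : 0 < orderOf y := orderOf_pos y
    have heq : orderOf y = orderOf g := le_antisymm (hg y) (Nat.le_of_dvd hpos hd)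
    have hle : Subgroup.zpowers g ≤ Subgroup.zpowers y := Subgroup.zpowers_le.2 hgy
    have hEq : Subgroup.zpowers g = Subgroup.zpowers y :=
      Subgroup.eq_of_le_of_card_ge hle (by rw [Nat.card_zpowers, Nat.card_zpowers, heq])
    show y ∈ Subgroup.zpowers g
    rw [hEq]
    exact Subgroup.mem_zpowers y

lemma left_mem_zpowers_mul {x z : G} (hc : Commute x z)
    (hcop : Nat.Coprime (orderOf x) (orderOf z)) :
    x ∈ Subgroup.zpowers (x * z) := by
  obtain ⟨n, h1, h2⟩ := Nat.chineseRemainder hcop 1 0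
  refine Subgroup.mem_zpowers_iff.2 ⟨(n : ℤ), ?_⟩
  have hxn : x ^ n = x ^ 1 := pow_eq_pow_iff_modEq.mpr h1
  have hzn : z ^ n = z ^ 0 := pow_eq_pow_iff_modEq.mpr h2
  rw [zpow_natCast, hc.mul_pow, hxn, hzn, pow_one, pow_zero, mul_one]

lemma right_mem_zpowers_mul {x z : G} (hc : Commute x z)
    (hcop : Nat.Coprime (orderOf x) (orderOf z)) :
    z ∈ Subgroup.zpowers (x * z) := by
  have h := left_mem_zpowers_mul hc.symm hcop.symm
  rwa [← hc.eq] at h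

/-- If `x ∈ P` is not a power of `y ∈ P`, then `x` is not a power of `y*z` for `z ∈ Q`,
with `P`, `Q` disjoint and `y`, `z` commuting. -/
lemma not_mem_zpowers_mul {P Q : Subgroup G} (hd : Disjoint P Q)
    {x y z : G} (hx : x ∈ P) (hy : y ∈ P) (hz : z ∈ Q) (hyz : Commute y z)
    (hxy : x ∉ Subgroup.zpowers y) :
    x ∉ Subgroup.zpowers (y * z) := by
  intro hmem
  obtain ⟨k, hk⟩ := Subgroup.mem_zpowers_iff.1 hmem
  rw [hyz.mul_zpow] at hk
  -- hk : y ^ k * z ^ k = x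
  have h1 : z ^ k = (y ^ k)⁻¹ * x := by rw [← hk]; group
  have h2 : z ^ k ∈ Q := Q.zpow_mem hz k
  have h3 : z ^ k ∈ P := h1 ▸ P.mul_mem (P.inv_mem (P.zpow_mem hy k)) hx
  have h4 : z ^ k = 1 := Subgroup.disjoint_def.mp hd h3 h2
  rw [h4, mul_one] at hk
  exact hxy ⟨k, hk⟩

/-- `x*z` is not a power of `y*z` under the same hypotheses. -/
lemma mul_not_mem_zpowers_mul {P Q : Subgroup G} (hd : Disjoint P Q)
    {x y z : G} (hx : x ∈ P) (hy : y ∈ P) (hz : z ∈ Q) (hyz : Commute y z)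
    (hxy : x ∉ Subgroup.zpowers y) :
    x * z ∉ Subgroup.zpowers (y * z) := by
  intro hmem
  obtain ⟨k, hk⟩ := Subgroup.mem_zpowers_iff.1 hmem
  rw [hyz.mul_zpow] at hk
  -- hk : y ^ k * z ^ k = x * z
  have h1 : x⁻¹ * y ^ k = z * (z ^ k)⁻¹ := by
    have : y ^ k = x * z * (z ^ k)⁻¹ := by rw [← hk]; group
    rw [this]; group
  have h2 : x⁻¹ * y ^ k ∈ P := P.mul_mem (P.inv_mem hx) (P.zpow_mem hy k)
  have h3 : x⁻¹ * y ^ k ∈ Q := h1 ▸ Q.mul_mem hz (Q.inv_mem (Q.zpow_mem hz k))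
  have h4 : x⁻¹ * y ^ k = 1 := Subgroup.disjoint_def.mp hd h2 h3
  have h5 : y ^ k = x := by
    have := congrArg (fun w => x * w) h4
    simpa using this
  exact hxy ⟨k, h5⟩

end Aux

theorem nilpotent_noncyclic_sylow_hasInducedP5 (G : Type*) [Group G] [Finite G]
    [Group.IsNilpotent G] (p q a b : ℕ) (hp : p.Prime) (hq : q.Prime) (hpq : p ≠ q)
    (ha : 1 ≤ a) (hb : 1 ≤ b) (hcard : Nat.card G = p ^ a * q ^ b)
    (hnc : ∀ P : Sylow p G, ¬ IsCyclic ↥(P : Subgroup G)) :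
    HasInducedP5 (powerGraph G) := by
  haveI := Fact.mk hp
  haveI := Fact.mk hq
  obtain ⟨P⟩ := (inferInstance : Nonempty (Sylow p G))
  -- two incomparable elements of P
  obtain ⟨x', y', hxy', hyx'⟩ := exists_incomparable_of_not_isCyclic (hnc P)
  set x : G := (x' : G) with hxdef
  set y : G := (y' : G) with hydef
  have hxy : x ∉ Subgroup.zpowers y := by
    rintro ⟨k, hk⟩
    exact hxy' ⟨k, by ext; push_cast; exact hk⟩
  have hyx : y ∉ Subgroup.zpowers x := by
    rintro ⟨k, hk⟩
    exact hyx' ⟨k, by ext; push_cast; exact hk⟩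
  have hxP : x ∈ (P : Subgroup G) := x'.2
  have hyP : y ∈ (P : Subgroup G) := y'.2
  have hx1 : x ≠ 1 := fun h => hxy (h ▸ Subgroup.one_mem _)
  have hy1 : y ≠ 1 := fun h => hyx (h ▸ Subgroup.one_mem _)
  -- an element z of order q
  obtain ⟨z, hz⟩ := exists_prime_orderOf_dvd_card' q
    (by rw [hcard]; exact Dvd.dvd.mul_left (dvd_pow_self q (by omega)) _)
  have hz1 : z ≠ 1 := by
    intro h
    rw [h, orderOf_one] at hz
    exact hq.one_lt.ne' hz.symm
  -- z lies in a Sylow q-subgroup Q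
  have hzpg : IsPGroup q (Subgroup.zpowers z) :=
    IsPGroup.of_card (by rw [Nat.card_zpowers, hz, pow_one])
  obtain ⟨Q, hQle⟩ := hzpg.exists_le_sylow
  have hzQ : z ∈ (Q : Subgroup G) := hQle (Subgroup.mem_zpowers z)
  -- Sylow subgroups of a nilpotent group are normal
  have hnormal := (isNilpotent_of_finite_tfae (G := G)).out 0 3
  have hPn : (P : Subgroup G).Normal := hnormal.mp ‹Group.IsNilpotent G› p (Fact.mk hp) P
  have hQn : (Q : Subgroup G).Normal := hnormal.mp ‹Group.IsNilpotent G› q (Fact.mk hq) Q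
  have hd : Disjoint (P : Subgroup G) (Q : Subgroup G) :=
    IsPGroup.disjoint_of_ne p q hpq _ _ P.2 Q.2
  have htriv : ∀ {g : G}, g ∈ (P : Subgroup G) → g ∈ (Q : Subgroup G) → g = 1 :=
    fun hg1 hg2 => Subgroup.disjoint_def.mp hd hg1 hg2
  have hcxz : Commute x z :=
    Subgroup.commute_of_normal_of_disjoint _ _ hPn hQn hd x z hxP hzQ
  have hcyz : Commute y z :=
    Subgroup.commute_of_normal_of_disjoint _ _ hPn hQn hd y z hyP hzQ
  -- coprimality of orders
  have hcop : ∀ {w : G}, w ∈ (P : Subgroup G) → Nat.Coprime (orderOf w) (orderOf z) := by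
    intro w hw
    obtain ⟨k, hk⟩ := P.2 ⟨w, hw⟩
    have hk' : w ^ p ^ k = 1 := by
      have := congrArg (Subgroup.subtype (P : Subgroup G)) hk
      push_cast at this
      simpa using this
    have hdvd : orderOf w ∣ p ^ k := orderOf_dvd_of_pow_eq_one hk'
    rw [hz]
    exact Nat.Coprime.coprime_dvd_left hdvd (((Nat.coprime_primes hp hq).mpr hpq).pow_left k)
  -- memberships used for edges
  have ex1 : x ∈ Subgroup.zpowers (x * z) := left_mem_zpowers_mul hcxz (hcop hxP)
  have ex2 : z ∈ Subgroup.zpowers (x * z) := right_mem_zpowers_mul hcxz (hcop hxP)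
  have ex3 : z ∈ Subgroup.zpowers (y * z) := right_mem_zpowers_mul hcyz (hcop hyP)
  have ex4 : y ∈ Subgroup.zpowers (y * z) := left_mem_zpowers_mul hcyz (hcop hyP)
  -- basic distinctness
  have hxz : x ≠ z := fun h => hx1 (htriv hxP (h ▸ hzQ))
  have hyz : y ≠ z := fun h => hy1 (htriv hyP (h ▸ hzQ))
  have hxyne : x ≠ y := fun h => hxy (h ▸ Subgroup.mem_zpowers y)
  have hzP : z ∉ (P : Subgroup G) := fun h => hz1 (htriv h hzQ)
  -- the five vertices: x, x*z, z, y*z, y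
  refine ⟨x, x * z, z, y * z, y, ?_, ?_, ?_, ?_, ?_, ?_, ?_, ?_, ?_, ?_, ?_, ?_, ?_, ?_,
    ?_, ?_, ?_, ?_, ?_, ?_⟩
  · intro h; exact hz1 (by rwa [left_eq_mul] at h)
  · exact hxz
  · intro h
    exact hzP (by
      have : z = y⁻¹ * x := by rw [h]; group
      exact this ▸ Subgroup.mul_mem _ (Subgroup.inv_mem _ hyP) hxP)
  · exact hxyne
  · intro h; exact hx1 (by rwa [mul_eq_right] at h)
  · intro h; exact hxyne (mul_right_cancel h)
  · intro h
    exact hzP (by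
      have : z = x⁻¹ * y := by rw [← h]; group
      exact this ▸ Subgroup.mul_mem _ (Subgroup.inv_mem _ hxP) hyP)
  · intro h; exact hy1 (by rwa [eq_comm, mul_eq_right] at h)
  · exact hyz.symm
  · intro h; exact hz1 (by rwa [eq_comm, left_eq_mul] at h)
  -- edges
  · exact ⟨fun h => hz1 (by rwa [left_eq_mul] at h), Or.inl ex1⟩
  · exact ⟨fun h => hx1 (by rwa [mul_eq_right] at h), Or.inr ex2⟩
  · exact ⟨fun h => hy1 (by rwa [eq_comm, mul_eq_right] at h), Or.inl ex3⟩
  · exact ⟨fun h => hz1 (by rwa [eq_comm, left_eq_mul] at h), Or.inr ex4⟩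
  -- non-edges
  · rintro ⟨-, h | h⟩
    · exact hx1 (htriv hxP (Subgroup.zpowers_le.2 hzQ h))
    · exact hz1 (htriv (Subgroup.zpowers_le.2 hxP h) hzQ)
  · rintro ⟨-, h | h⟩
    · exact not_mem_zpowers_mul hd hxP hyP hzQ hcyz hxy h
    · -- y * z ∈ zpowers x ≤ P, so z ∈ P
      have hyzP : y * z ∈ (P : Subgroup G) := Subgroup.zpowers_le.2 hxP h
      exact hzP (by
        have : z = y⁻¹ * (y * z) := by group
        exact this ▸ Subgroup.mul_mem _ (Subgroup.inv_mem _ hyP) hyzP)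
  · rintro ⟨-, h | h⟩
    · exact hxy h
    · exact hyx h
  · rintro ⟨-, h | h⟩
    · exact mul_not_mem_zpowers_mul hd hxP hyP hzQ hcyz hxy h
    · exact mul_not_mem_zpowers_mul hd hyP hxP hzQ hcxz hyx h
  · rintro ⟨-, h | h⟩
    · -- x * z ∈ zpowers y ≤ P
      have hxzP : x * z ∈ (P : Subgroup G) := Subgroup.zpowers_le.2 hyP h
      exact hzP (by
        have : z = x⁻¹ * (x * z) := by group
        exact this ▸ Subgroup.mul_mem _ (Subgroup.inv_mem _ hxP) hxzP)
    · exact not_mem_zpowers_mul hd hyP hxP hzQ hcxz hyx h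
  · rintro ⟨-, h | h⟩
    · exact hz1 (htriv (Subgroup.zpowers_le.2 hyP h) hzQ)
    · exact hy1 (htriv hyP (Subgroup.zpowers_le.2 hzQ h))
end

section
/- Let p, q be distinct primes and a, b ≥ 2. The power graph of the cyclic group C_{p^a q^b} contains an induced path on 5 vertices. -/
lemma pq_pow_dvd_iff {p q : ℕ} (hp : p.Prime) (hq : q.Prime) (hpq : p ≠ q)
    (i j k l : ℕ) : p ^ i * q ^ j ∣ p ^ k * q ^ l ↔ i ≤ k ∧ j ≤ l := by
  have hco : Nat.Coprime p q := (Nat.coprime_primes hp hq).mpr hpq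
  constructor
  · intro h
    constructor
    · have h1 : p ^ i ∣ p ^ k * q ^ l := (dvd_mul_right _ _).trans h
      have h2 : p ^ i ∣ p ^ k := (Nat.Coprime.pow _ _ hco).dvd_of_dvd_mul_right h1
      exact (Nat.pow_dvd_pow_iff_le_right hp.one_lt).mp h2
    · have h1 : q ^ j ∣ p ^ k * q ^ l := (dvd_mul_left _ _).trans h
      have h2 : q ^ j ∣ q ^ l := (Nat.Coprime.pow _ _ hco.symm).dvd_of_dvd_mul_left h1
      exact (Nat.pow_dvd_pow_iff_le_right hq.one_lt).mp h2
  · rintro ⟨h1, h2⟩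
    exact mul_dvd_mul (pow_dvd_pow p h1) (pow_dvd_pow q h2)

theorem cyclic_paqb_hasInducedP5 (G : Type*) [Group G] [Finite G] [IsCyclic G]
    (p q a b : ℕ) (hp : p.Prime) (hq : q.Prime) (hpq : p ≠ q)
    (ha : 2 ≤ a) (hb : 2 ≤ b) (hcard : Nat.card G = p ^ a * q ^ b) :
    HasInducedP5 (powerGraph G) := by
  obtain ⟨g, hg⟩ := IsCyclic.exists_generator (α := G)
  set n := p ^ a * q ^ b with hn
  have hn0 : n ≠ 0 := Nat.mul_ne_zero (pow_ne_zero _ hp.pos.ne') (pow_ne_zero _ hq.pos.ne')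
  have hgtop : Subgroup.zpowers g = ⊤ := by
    ext x; simpa using hg x
  have hog : orderOf g = n := by
    rw [← Nat.card_zpowers, hgtop, Subgroup.card_top, hcard]
  set x : ℕ → ℕ → G := fun i j => g ^ (n / (p ^ i * q ^ j)) with hx
  have hdvd : ∀ i j : ℕ, i ≤ a → j ≤ b → p ^ i * q ^ j ∣ n := fun i j hi hj =>
    (pq_pow_dvd_iff hp hq hpq i j a b).mpr ⟨hi, hj⟩
  have hord : ∀ i j : ℕ, i ≤ a → j ≤ b → orderOf (x i j) = p ^ i * q ^ j := by
    intro i j hi hj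
    rw [hx]
    simp only
    rw [orderOf_pow, hog, Nat.gcd_eq_right (Nat.div_dvd_of_dvd (hdvd i j hi hj)),
      Nat.div_div_self (hdvd i j hi hj) hn0]
  have hne : ∀ i j k l : ℕ, i ≤ a → j ≤ b → k ≤ a → l ≤ b → ¬(i = k ∧ j = l) →
      x i j ≠ x k l := by
    intro i j k l hi hj hk hl hne heq
    have h1 : p ^ i * q ^ j = p ^ k * q ^ l := by
      rw [← hord i j hi hj, ← hord k l hk hl, heq]
    have h2 := (pq_pow_dvd_iff hp hq hpq i j k l).mp (h1 ▸ dvd_refl _)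
    have h3 := (pq_pow_dvd_iff hp hq hpq k l i j).mp (h1 ▸ dvd_refl _)
    omega
  have hmem : ∀ i j k l : ℕ, k ≤ a → l ≤ b → i ≤ k → j ≤ l →
      x i j ∈ Subgroup.zpowers (x k l) := by
    intro i j k l hk hl hik hjl
    have hd12 : p ^ i * q ^ j ∣ p ^ k * q ^ l :=
      mul_dvd_mul (pow_dvd_pow p hik) (pow_dvd_pow q hjl)
    have hd2n : p ^ k * q ^ l ∣ n := hdvd k l hk hl
    have key : n / (p ^ k * q ^ l) * ((p ^ k * q ^ l) / (p ^ i * q ^ j)) =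
        n / (p ^ i * q ^ j) := by
      rw [Nat.div_mul_div_comm hd2n hd12, mul_comm (p ^ k * q ^ l) (p ^ i * q ^ j),
        Nat.mul_div_mul_right _ _ (Nat.pos_of_dvd_of_pos hd2n (Nat.pos_of_ne_zero hn0))]
    have h := Subgroup.pow_mem _ (Subgroup.mem_zpowers (x k l))
      ((p ^ k * q ^ l) / (p ^ i * q ^ j))
    rw [hx] at h ⊢
    simp only at h ⊢
    rwa [← pow_mul, key] at h
  have hadj : ∀ i j k l : ℕ, i ≤ a → j ≤ b → k ≤ a → l ≤ b → i ≤ k → j ≤ l →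
      ¬(i = k ∧ j = l) → (powerGraph G).Adj (x i j) (x k l) := by
    intro i j k l hi hj hk hl hik hjl hnel
    exact ⟨hne i j k l hi hj hk hl hnel, Or.inl (hmem i j k l hk hl hik hjl)⟩
  have hnadj : ∀ i j k l : ℕ, i ≤ a → j ≤ b → k ≤ a → l ≤ b →
      ¬(i ≤ k ∧ j ≤ l) → ¬(k ≤ i ∧ l ≤ j) → ¬(powerGraph G).Adj (x i j) (x k l) := by
    rintro i j k l hi hj hk hl h1 h2 ⟨-, hmem'⟩
    rcases hmem' with h | h
    · have := orderOf_dvd_of_mem_zpowers h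
      rw [hord i j hi hj, hord k l hk hl] at this
      exact h1 ((pq_pow_dvd_iff hp hq hpq i j k l).mp this)
    · have := orderOf_dvd_of_mem_zpowers h
      rw [hord i j hi hj, hord k l hk hl] at this
      exact h2 ((pq_pow_dvd_iff hp hq hpq k l i j).mp this)
  refine ⟨x 2 0, x 2 1, x 1 1, x 1 2, x 0 2, ?_, ?_, ?_, ?_, ?_, ?_, ?_, ?_, ?_, ?_,
    ?_, ?_, ?_, ?_, ?_, ?_, ?_, ?_, ?_, ?_⟩
  · exact hne 2 0 2 1 (by omega) (by omega) (by omega) (by omega) (by omega)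
  · exact hne 2 0 1 1 (by omega) (by omega) (by omega) (by omega) (by omega)
  · exact hne 2 0 1 2 (by omega) (by omega) (by omega) (by omega) (by omega)
  · exact hne 2 0 0 2 (by omega) (by omega) (by omega) (by omega) (by omega)
  · exact hne 2 1 1 1 (by omega) (by omega) (by omega) (by omega) (by omega)
  · exact hne 2 1 1 2 (by omega) (by omega) (by omega) (by omega) (by omega)
  · exact hne 2 1 0 2 (by omega) (by omega) (by omega) (by omega) (by omega)
  · exact hne 1 1 1 2 (by omega) (by omega) (by omega) (by omega) (by omega)
  · exact hne 1 1 0 2 (by omega) (by omega) (by omega) (by omega) (by omega)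
  · exact hne 1 2 0 2 (by omega) (by omega) (by omega) (by omega) (by omega)
  · exact hadj 2 0 2 1 (by omega) (by omega) (by omega) (by omega) le_rfl (by omega) (by omega)
  · exact ((powerGraph G).adj_symm) (hadj 1 1 2 1 (by omega) (by omega) ha (by omega) (by omega) le_rfl (by omega))
  · exact hadj 1 1 1 2 (by omega) (by omega) (by omega) (by omega) le_rfl (by omega) (by omega)
  · exact ((powerGraph G).adj_symm) (hadj 0 2 1 2 (by omega) hb (by omega) hb (by omega) le_rfl (by omega))
  · exact hnadj 2 0 1 1 (by omega) (by omega) (by omega) (by omega) (by omega) (by omega)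
  · exact hnadj 2 0 1 2 (by omega) (by omega) (by omega) (by omega) (by omega) (by omega)
  · exact hnadj 2 0 0 2 (by omega) (by omega) (by omega) (by omega) (by omega) (by omega)
  · exact hnadj 2 1 1 2 (by omega) (by omega) (by omega) (by omega) (by omega) (by omega)
  · exact hnadj 2 1 0 2 (by omega) (by omega) (by omega) (by omega) (by omega) (by omega)
  · exact hnadj 1 1 0 2 (by omega) (by omega) (by omega) (by omega) (by omega) (by omega)
end

section
/- Let p, q be distinct primes and a ≥ 1. Then the power graph of the cyclic group C_{p^a q} contains no induced path on 5 vertices and no induced complement of a path on 5 vertices. -/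
lemma mem_zpowers_of_orderOf_dvd {G : Type*} [Group G] [Finite G] [IsCyclic G]
    {u v : G} (h : orderOf u ∣ orderOf v) : u ∈ Subgroup.zpowers v := by
  classical
  have : Fintype G := Fintype.ofFinite G
  set n := orderOf v with hn
  have hu1 : u ^ n = 1 := orderOf_dvd_iff_pow_eq_one.mp h
  have hle := IsCyclic.card_pow_eq_one_le (α := G) (n := n) (orderOf_pos v)
  have hsub : (Subgroup.zpowers v : Set G).toFinset ⊆ Finset.univ.filter (fun x => x ^ n = 1) := by
    intro x hx
    simp only [Set.mem_toFinset, SetLike.mem_coe] at hx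
    simp only [Finset.mem_filter, Finset.mem_univ, true_and]
    exact orderOf_dvd_iff_pow_eq_one.mp (orderOf_dvd_of_mem_zpowers hx)
  have hcard : (Subgroup.zpowers v : Set G).toFinset.card = n := by
    rw [Set.toFinset_card]
    simpa using Fintype.card_zpowers (x := v)
  have heq : (Subgroup.zpowers v : Set G).toFinset = Finset.univ.filter (fun x => x ^ n = 1) :=
    Finset.eq_of_subset_of_card_le hsub (by omega)
  have : u ∈ Finset.univ.filter (fun x => x ^ n = 1) := by simp [hu1]
  rw [← heq] at this
  simpa using this

lemma fact_eq_zero_aux {p q a r : ℕ} (hp : p.Prime) (hq : q.Prime) (hrp : r ≠ p) (hrq : r ≠ q) :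
    (p ^ a * q).factorization r = 0 := by
  rw [Nat.factorization_mul (pow_ne_zero a hp.pos.ne') hq.pos.ne',
    hp.factorization_pow, hq.factorization]
  simp [Finsupp.single_apply, hrp.symm, hrq.symm]

lemma dvd_iff_fact {p q a : ℕ} (hp : p.Prime) (hq : q.Prime) {m n : ℕ}
    (hm : m ∣ p ^ a * q) (hn : n ∣ p ^ a * q) :
    m ∣ n ↔ m.factorization p ≤ n.factorization p ∧ m.factorization q ≤ n.factorization q := by
  have hN : p ^ a * q ≠ 0 := Nat.mul_ne_zero (pow_ne_zero a hp.pos.ne') hq.pos.ne'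
  have hm0 : m ≠ 0 := fun h => hN (by simpa [h] using hm)
  have hn0 : n ≠ 0 := fun h => hN (by simpa [h] using hn)
  constructor
  · intro h
    have := (Nat.factorization_le_iff_dvd hm0 hn0).mpr h
    exact ⟨this p, this q⟩
  · rintro ⟨h1, h2⟩
    refine (Nat.factorization_le_iff_dvd hm0 hn0).mp ?_
    intro r
    by_cases hrp : r = p
    · subst hrp; exact h1
    by_cases hrq : r = q
    · subst hrq; exact h2
    have : m.factorization r = 0 := by
      have := ((Nat.factorization_le_iff_dvd hm0 hN).mpr hm) r
      have h0 := fact_eq_zero_aux (a := a) hp hq hrp hrq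
      omega
    simp [this]

lemma fact_q_le_one {p q a : ℕ} (hp : p.Prime) (hq : q.Prime) (hpq : p ≠ q) {m : ℕ}
    (hm : m ∣ p ^ a * q) : m.factorization q ≤ 1 := by
  have hN : p ^ a * q ≠ 0 := Nat.mul_ne_zero (pow_ne_zero a hp.pos.ne') hq.pos.ne'
  have hm0 : m ≠ 0 := fun h => hN (by simpa [h] using hm)
  have := ((Nat.factorization_le_iff_dvd hm0 hN).mpr hm) q
  have hNq : (p ^ a * q).factorization q = 1 := by
    rw [Nat.factorization_mul (pow_ne_zero a hp.pos.ne') hq.pos.ne',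
      hp.factorization_pow, hq.factorization]
    simp [Finsupp.single_apply, hp.factorization, hpq]
  omega

theorem cyclic_paq_p5_free (G : Type*) [Group G] [Finite G] [IsCyclic G]
    (p q a : ℕ) (hp : p.Prime) (hq : q.Prime) (hpq : p ≠ q)
    (ha : 1 ≤ a) (hcard : Nat.card G = p ^ a * q) :
    ¬ HasInducedP5 (powerGraph G) ∧ ¬ HasInducedP5 (powerGraph G)ᶜ := by
  have hdvd : ∀ x : G, orderOf x ∣ p ^ a * q := fun x => hcard ▸ orderOf_dvd_natCard x
  set i : G → ℕ := fun x => (orderOf x).factorization p with hi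
  set j : G → ℕ := fun x => (orderOf x).factorization q with hj
  have hj1 : ∀ x : G, j x ≤ 1 := fun x => fact_q_le_one hp hq hpq (hdvd x)
  have hadj : ∀ x y : G, (powerGraph G).Adj x y ↔
      x ≠ y ∧ ((i x ≤ i y ∧ j x ≤ j y) ∨ (i y ≤ i x ∧ j y ≤ j x)) := by
    intro x y
    constructor
    · rintro ⟨hne, h | h⟩
      · exact ⟨hne, Or.inl ((dvd_iff_fact hp hq (hdvd x) (hdvd y)).mp
          (orderOf_dvd_of_mem_zpowers h))⟩
      · exact ⟨hne, Or.inr ((dvd_iff_fact hp hq (hdvd y) (hdvd x)).mp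
          (orderOf_dvd_of_mem_zpowers h))⟩
    · rintro ⟨hne, h | h⟩
      · exact ⟨hne, Or.inl (mem_zpowers_of_orderOf_dvd
          ((dvd_iff_fact hp hq (hdvd x) (hdvd y)).mpr h))⟩
      · exact ⟨hne, Or.inr (mem_zpowers_of_orderOf_dvd
          ((dvd_iff_fact hp hq (hdvd y) (hdvd x)).mpr h))⟩
  constructor
  · rintro ⟨u, v, w, x, y, h1, h2, h3, h4, h5, h6, h7, h8, h9, h10,
      e1, e2, e3, e4, n1, n2, n3, n4, n5, n6⟩
    rw [hadj] at e1 e2 e3 e4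
    have N1 : ¬(i u ≤ i w ∧ j u ≤ j w) ∧ ¬(i w ≤ i u ∧ j w ≤ j u) :=
      ⟨fun h => n1 ((hadj u w).mpr ⟨h2, Or.inl h⟩),
       fun h => n1 ((hadj u w).mpr ⟨h2, Or.inr h⟩)⟩
    have N2 : ¬(i u ≤ i x ∧ j u ≤ j x) ∧ ¬(i x ≤ i u ∧ j x ≤ j u) :=
      ⟨fun h => n2 ((hadj u x).mpr ⟨h3, Or.inl h⟩),
       fun h => n2 ((hadj u x).mpr ⟨h3, Or.inr h⟩)⟩
    have N3 : ¬(i u ≤ i y ∧ j u ≤ j y) ∧ ¬(i y ≤ i u ∧ j y ≤ j u) :=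
      ⟨fun h => n3 ((hadj u y).mpr ⟨h4, Or.inl h⟩),
       fun h => n3 ((hadj u y).mpr ⟨h4, Or.inr h⟩)⟩
    have N4 : ¬(i v ≤ i x ∧ j v ≤ j x) ∧ ¬(i x ≤ i v ∧ j x ≤ j v) :=
      ⟨fun h => n4 ((hadj v x).mpr ⟨h6, Or.inl h⟩),
       fun h => n4 ((hadj v x).mpr ⟨h6, Or.inr h⟩)⟩
    have N5 : ¬(i v ≤ i y ∧ j v ≤ j y) ∧ ¬(i y ≤ i v ∧ j y ≤ j v) :=
      ⟨fun h => n5 ((hadj v y).mpr ⟨h7, Or.inl h⟩),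
       fun h => n5 ((hadj v y).mpr ⟨h7, Or.inr h⟩)⟩
    have N6 : ¬(i w ≤ i y ∧ j w ≤ j y) ∧ ¬(i y ≤ i w ∧ j y ≤ j w) :=
      ⟨fun h => n6 ((hadj w y).mpr ⟨h9, Or.inl h⟩),
       fun h => n6 ((hadj w y).mpr ⟨h9, Or.inr h⟩)⟩
    have ju := hj1 u; have jv := hj1 v; have jw := hj1 w; have jx := hj1 x; have jy := hj1 y
    omega
  · rintro ⟨u, v, w, x, y, h1, h2, h3, h4, h5, h6, h7, h8, h9, h10,
      e1, e2, e3, e4, n1, n2, n3, n4, n5, n6⟩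
    simp only [SimpleGraph.compl_adj, not_and, not_not] at e1 e2 e3 e4 n1 n2 n3 n4 n5 n6
    obtain ⟨-, e1⟩ := e1; obtain ⟨-, e2⟩ := e2; obtain ⟨-, e3⟩ := e3; obtain ⟨-, e4⟩ := e4
    have E1 : ¬(i u ≤ i v ∧ j u ≤ j v) ∧ ¬(i v ≤ i u ∧ j v ≤ j u) :=
      ⟨fun h => e1 ((hadj u v).mpr ⟨h1, Or.inl h⟩),
       fun h => e1 ((hadj u v).mpr ⟨h1, Or.inr h⟩)⟩
    have E2 : ¬(i v ≤ i w ∧ j v ≤ j w) ∧ ¬(i w ≤ i v ∧ j w ≤ j v) :=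
      ⟨fun h => e2 ((hadj v w).mpr ⟨h5, Or.inl h⟩),
       fun h => e2 ((hadj v w).mpr ⟨h5, Or.inr h⟩)⟩
    have E3 : ¬(i w ≤ i x ∧ j w ≤ j x) ∧ ¬(i x ≤ i w ∧ j x ≤ j w) :=
      ⟨fun h => e3 ((hadj w x).mpr ⟨h8, Or.inl h⟩),
       fun h => e3 ((hadj w x).mpr ⟨h8, Or.inr h⟩)⟩
    have E4 : ¬(i x ≤ i y ∧ j x ≤ j y) ∧ ¬(i y ≤ i x ∧ j y ≤ j x) :=
      ⟨fun h => e4 ((hadj x y).mpr ⟨h10, Or.inl h⟩),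
       fun h => e4 ((hadj x y).mpr ⟨h10, Or.inr h⟩)⟩
    have A1 := ((hadj u w).mp (n1 h2)).2
    have A2 := ((hadj u x).mp (n2 h3)).2
    have A3 := ((hadj u y).mp (n3 h4)).2
    have A4 := ((hadj v x).mp (n4 h6)).2
    have A5 := ((hadj v y).mp (n5 h7)).2
    have A6 := ((hadj w y).mp (n6 h9)).2
    have ju := hj1 u; have jv := hj1 v; have jw := hj1 w; have jx := hj1 x; have jy := hj1 y
    omega
end

section
/- Let G be a finite group containing two distinct elements of order pq for distinct primes p and q. Then the power graph P(G) contains an induced diamond (K₄ minus an edge). -/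
theorem two_elements_order_pq_diamond (G : Type*) [Group G] [Finite G]
    (p q : ℕ) (hp : p.Prime) (hq : q.Prime) (hpq : p ≠ q)
    (x y : G) (hxy : x ≠ y) (hx : orderOf x = p * q) (hy : orderOf y = p * q) :
    HasInducedDiamond (powerGraph G) := by
  have hp1 := hp.one_lt
  have hq1 := hq.one_lt
  have ha : orderOf (x ^ p) = q := by
    rw [orderOf_pow, hx, Nat.gcd_eq_right ⟨q, rfl⟩, Nat.mul_div_cancel_left _ hp.pos]
  have hd : orderOf (x ^ q) = p := by
    rw [orderOf_pow, hx, Nat.gcd_eq_right ⟨p, mul_comm p q⟩, Nat.mul_div_cancel _ hq.pos]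
  have hc : orderOf x⁻¹ = p * q := by rw [orderOf_inv, hx]
  have hne : ∀ u v : G, orderOf u ≠ orderOf v → u ≠ v := by
    intro u v h heq; exact h (by rw [heq])
  have hqpq : q ≠ p * q := by nlinarith
  have hppq : p ≠ p * q := by nlinarith
  have hbc : x ≠ x⁻¹ := by
    intro h
    have h2 : x ^ 2 = 1 := by rw [pow_two]; nth_rewrite 2 [h]; simp
    have := Nat.le_of_dvd (by norm_num) (hx ▸ orderOf_dvd_of_pow_eq_one h2)
    nlinarith
  refine ⟨x ^ p, x, x⁻¹, x ^ q, hne _ _ (by rw [ha, hx]; exact hqpq),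
    hne _ _ (by rw [ha, hc]; exact hqpq), hne _ _ (by rw [ha, hd]; exact fun h => hpq (h ▸ rfl)),
    hbc, hne _ _ (by rw [hx, hd]; exact fun h => hppq h.symm),
    hne _ _ (by rw [hc, hd]; exact fun h => hppq h.symm), ?_, ?_, ?_, ?_, ?_, ?_⟩
  · exact ⟨hne _ _ (by rw [ha, hx]; exact hqpq), Or.inl ⟨(p : ℤ), by simp⟩⟩
  · exact ⟨hne _ _ (by rw [ha, hc]; exact hqpq), Or.inl ⟨(-p : ℤ), by simp⟩⟩
  · exact ⟨hbc, Or.inr ⟨(-1 : ℤ), by simp⟩⟩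
  · exact ⟨hne _ _ (by rw [hx, hd]; exact fun h => hppq h.symm), Or.inr ⟨(q : ℤ), by simp⟩⟩
  · exact ⟨hne _ _ (by rw [hc, hd]; exact fun h => hppq h.symm), Or.inr ⟨(-q : ℤ), by simp⟩⟩
  · rintro ⟨-, h | h⟩
    · have := orderOf_dvd_of_mem_zpowers h
      rw [ha, hd] at this
      exact hpq ((Nat.prime_dvd_prime_iff_eq hq hp).mp this).symm
    · have := orderOf_dvd_of_mem_zpowers h
      rw [ha, hd] at this
      exact hpq ((Nat.prime_dvd_prime_iff_eq hp hq).mp this)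
end

section
/- Let G be an EPPO group. Then the power graph P(G) is chordal; in particular it contains no induced cycle of even length at least 4. -/
section aux
variable {G : Type*} [Group G]

lemma zpowers_zpow_gcd [Finite G] (v : G) (a : ℤ) :
    Subgroup.zpowers (v ^ a) = Subgroup.zpowers (v ^ (Int.gcd a (orderOf v) : ℤ)) := by
  apply le_antisymm
  · rw [Subgroup.zpowers_le]
    obtain ⟨c, hc⟩ : (Int.gcd a (orderOf v) : ℤ) ∣ a := Int.gcd_dvd_left _ _
    exact Subgroup.mem_zpowers_iff.mpr ⟨c, by rw [← zpow_mul, ← hc]⟩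
  · rw [Subgroup.zpowers_le]
    rw [Int.gcd_eq_gcd_ab a (orderOf v), zpow_add, zpow_mul, zpow_mul]
    have h1 : (v : G) ^ ((orderOf v : ℤ)) = 1 := by
      rw [zpow_natCast, pow_orderOf_eq_one]
    rw [h1, one_zpow, mul_one]
    exact Subgroup.zpow_mem _ (Subgroup.mem_zpowers _) _

lemma gcd_dvd_ord (v : G) (a : ℤ) : Int.gcd a (orderOf v) ∣ orderOf v := by
  rw [Int.gcd, Int.natAbs_natCast]
  exact Nat.gcd_dvd_right _ _

lemma comparable_of_mem_zpowers [Finite G] (v : G) (hv : IsPrimePow (orderOf v))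
    {u w : G} (hu : u ∈ Subgroup.zpowers v) (hw : w ∈ Subgroup.zpowers v) :
    u ∈ Subgroup.zpowers w ∨ w ∈ Subgroup.zpowers u := by
  obtain ⟨a, rfl⟩ := hu
  obtain ⟨b, rfl⟩ := hw
  obtain ⟨p, k, hp, hk, hm⟩ := hv
  have hpp : p.Prime := hp.nat_prime
  obtain ⟨s, hs, hsa⟩ := (Nat.dvd_prime_pow hpp).mp (hm ▸ gcd_dvd_ord v a)
  obtain ⟨t, ht, htb⟩ := (Nat.dvd_prime_pow hpp).mp (hm ▸ gcd_dvd_ord v b)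
  rw [hm] at hsa htb
  have key : ∀ x y : ℤ, Int.gcd x (orderOf v) ∣ Int.gcd y (orderOf v) →
      v ^ y ∈ Subgroup.zpowers (v ^ x) := by
    intro x y hxy
    rw [zpowers_zpow_gcd v x]
    have : v ^ (Int.gcd y (orderOf v) : ℤ) ∈ Subgroup.zpowers (v ^ (Int.gcd x (orderOf v) : ℤ)) := by
      obtain ⟨c, hc⟩ := Int.natCast_dvd_natCast.mpr hxy
      exact Subgroup.mem_zpowers_iff.mpr ⟨c, by rw [← zpow_mul, ← hc]⟩
    have h2 := (Subgroup.zpowers_le.mpr this)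
    exact h2 ((zpowers_zpow_gcd v y) ▸ Subgroup.mem_zpowers _)
  rcases le_total s t with h | h
  · exact Or.inr (key a b (by rw [hsa, htb]; exact pow_dvd_pow p h))
  · exact Or.inl (key b a (by rw [hsa, htb]; exact pow_dvd_pow p h))
end aux

theorem eppo_power_graph_chordal (G : Type*) [Group G] [Finite G]
    (hEPPO : ∀ x : G, x ≠ 1 → IsPrimePow (orderOf x)) :
    ¬ ∃ n : ℕ, 4 ≤ n ∧ ∃ f : ZMod n → G, Function.Injective f ∧
      ∀ i j : ZMod n, (powerGraph G).Adj (f i) (f j) ↔ (j = i + 1 ∨ i = j + 1) := by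
  rintro ⟨n, hn, f, hf, hadj⟩
  haveI : NeZero n := ⟨by omega⟩
  have hcast : ∀ m : ℕ, 0 < m → m < n → ((m : ZMod n) : ZMod n) ≠ 0 := by
    intro m hm h0 h
    rw [ZMod.natCast_eq_zero_iff] at h
    have := Nat.le_of_dvd hm h
    omega
  have h1 : ((1 : ℕ) : ZMod n) ≠ 0 := hcast 1 (by omega) (by omega)
  have h2 : ((2 : ℕ) : ZMod n) ≠ 0 := hcast 2 (by omega) (by omega)
  have h3 : ((3 : ℕ) : ZMod n) ≠ 0 := hcast 3 (by omega) (by omega)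
  obtain ⟨i, hi⟩ := Finite.exists_max (fun j : ZMod n => orderOf (f j))
  -- basic adjacency facts
  have adjL : (powerGraph G).Adj (f (i - 1)) (f i) :=
    (hadj (i - 1) i).mpr (Or.inl (by ring))
  have adjR : (powerGraph G).Adj (f i) (f (i + 1)) :=
    (hadj i (i + 1)).mpr (Or.inl rfl)
  have nonadj : ¬ (powerGraph G).Adj (f (i - 1)) (f (i + 1)) := by
    intro h
    rcases (hadj _ _).mp h with h' | h'
    · apply h1; push_cast
      linear_combination h'
    · apply h3; push_cast
      linear_combination -h'
  have huwne : f (i - 1) ≠ f (i + 1) := by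
    intro h
    apply h2
    have := hf h
    push_cast
    linear_combination -this
  have hv1 : f i ≠ 1 := by
    intro h
    apply absurd ((hadj i (i + 2)).mp ?_) ?_
    · constructor
      · intro hfe
        apply h2
        have := hf hfe
        push_cast
        linear_combination -this
      · left; rw [h]; exact Subgroup.one_mem _
    · rintro (h' | h')
      · apply h1; push_cast
        linear_combination h'
      · apply h3; push_cast
        linear_combination -h'
  -- both neighbors lie in zpowers (f i)
  have hmem : ∀ j : ZMod n, (powerGraph G).Adj (f j) (f i) → f j ∈ Subgroup.zpowers (f i) := by
    rintro j ⟨hne, h | h⟩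
    · exact h
    · -- f i ∈ zpowers (f j), use maximality of orderOf (f i)
      have hdvd : orderOf (f i) ∣ orderOf (f j) := orderOf_dvd_of_mem_zpowers h
      have hle : orderOf (f i) ≤ orderOf (f j) := Nat.le_of_dvd (orderOf_pos _) hdvd
      have heq : orderOf (f j) = orderOf (f i) := le_antisymm (hi j) hle
      have hsub : (Subgroup.zpowers (f i) : Set G) ⊆ (Subgroup.zpowers (f j) : Set G) :=
        SetLike.coe_subset_coe.mpr (Subgroup.zpowers_le.mpr h)
      have hcard : (Subgroup.zpowers (f j) : Set G).ncard ≤ (Subgroup.zpowers (f i) : Set G).ncard := by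
        rw [← Nat.card_coe_set_eq, ← Nat.card_coe_set_eq]
        have e1 : Nat.card (Subgroup.zpowers (f j) : Set G) = orderOf (f j) := Nat.card_zpowers _
        have e2 : Nat.card (Subgroup.zpowers (f i) : Set G) = orderOf (f i) := Nat.card_zpowers _
        rw [e1, e2, heq]
      have hset := Set.eq_of_subset_of_ncard_le hsub hcard (Set.toFinite _)
      have : f j ∈ (Subgroup.zpowers (f j) : Set G) := Subgroup.mem_zpowers _
      rwa [← hset] at this
  have hu := hmem (i - 1) adjL
  have hw := hmem (i + 1) adjR.symm
  rcases comparable_of_mem_zpowers (f i) (hEPPO _ hv1) hu hw with h | h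
  · exact nonadj ⟨huwne, Or.inl h⟩
  · exact nonadj ⟨huwne, Or.inr h⟩
end

section
/- Let G be a finite 3-group of exponent 3 with |G| > 3. Then the proper power graph P*(G) contains 2K₂ (two disjoint edges) as an induced subgraph; hence P*(G) is not a chain graph. -/
/-- The proper power graph: the power graph restricted to non-identity elements. -/
def properPowerGraph (G : Type*) [Group G] : SimpleGraph {x : G // x ≠ 1} :=
  SimpleGraph.induce {x : G | x ≠ 1} (powerGraph G)

lemma mem_zpowers_ord3 {G : Type*} [Group G] {x : G} (hx : orderOf x = 3) (g : G) :
    g ∈ Subgroup.zpowers x ↔ g = 1 ∨ g = x ∨ g = x ^ 2 := by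
  constructor
  · rintro ⟨k, hk⟩
    simp only at hk
    rw [← hk, ← zpow_mod_orderOf, hx]
    have h : k % (3:ℕ) = 0 ∨ k % (3:ℕ) = 1 ∨ k % (3:ℕ) = 2 := by omega
    rcases h with h | h | h <;> rw [h]
    · simp
    · simp
    · right; right
      rw [show ((2:ℤ)) = ((2:ℕ):ℤ) from rfl, zpow_natCast]
  · rintro (rfl | rfl | rfl)
    · exact Subgroup.one_mem _
    · exact Subgroup.mem_zpowers _
    · exact Subgroup.pow_mem _ (Subgroup.mem_zpowers _) 2

lemma sq_sq_of_cube_eq_one {G : Type*} [Group G] {x : G} (h : x ^ 3 = 1) :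
    (x ^ 2) ^ 2 = x := by
  rw [← pow_mul]
  have : x ^ 4 = x ^ 3 * x := by rw [← pow_succ]
  rw [show 2 * 2 = 4 from rfl, this, h, one_mul]

theorem three_group_exponent_three_2K2 (G : Type*) [Group G] [Finite G]
    (n : ℕ) (hcard : Nat.card G = 3 ^ n) (hexp : ∀ x : G, x ≠ 1 → orderOf x = 3)
    (hbig : 3 < Nat.card G) :
    ∃ a b c d : {x : G // x ≠ 1},
      a ≠ b ∧ a ≠ c ∧ a ≠ d ∧ b ≠ c ∧ b ≠ d ∧ c ≠ d ∧
      (properPowerGraph G).Adj a b ∧ (properPowerGraph G).Adj c d ∧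
      ¬(properPowerGraph G).Adj a c ∧ ¬(properPowerGraph G).Adj a d ∧
      ¬(properPowerGraph G).Adj b c ∧ ¬(properPowerGraph G).Adj b d := by
  have : Nontrivial G := Finite.one_lt_card_iff_nontrivial.mp (by omega)
  obtain ⟨x, hx1⟩ := exists_ne (1 : G)
  have hx3 : orderOf x = 3 := hexp x hx1
  have hxc : x ^ 3 = 1 := by rw [← hx3]; exact pow_orderOf_eq_one x
  obtain ⟨y, hyx⟩ : ∃ y : G, y ∉ Subgroup.zpowers x := by
    by_contra h
    push_neg at h
    have htop : Subgroup.zpowers x = ⊤ := Subgroup.eq_top_iff' _ |>.mpr h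
    have h2 := Nat.card_zpowers x
    rw [htop, Subgroup.card_top, hx3] at h2
    omega
  have hy1 : y ≠ 1 := fun h => hyx (h ▸ Subgroup.one_mem _)
  have hy3 : orderOf y = 3 := hexp y hy1
  have hyc : y ^ 3 = 1 := by rw [← hy3]; exact pow_orderOf_eq_one y
  have hxss : (x ^ 2) ^ 2 = x := sq_sq_of_cube_eq_one hxc
  have hyss : (y ^ 2) ^ 2 = y := sq_sq_of_cube_eq_one hyc
  -- basic non-memberships
  have hyinx : y ∈ Subgroup.zpowers x → False := hyx
  have hxy : x ∉ Subgroup.zpowers y := by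
    rw [mem_zpowers_ord3 hy3]
    rintro (h | h | h)
    · exact hx1 h
    · exact hyx (h ▸ Subgroup.mem_zpowers x)
    · apply hyx
      rw [mem_zpowers_ord3 hx3]
      right; right
      rw [h, hyss]
  have hx2ne1 : x ^ 2 ≠ 1 := by
    intro h
    have := orderOf_dvd_of_pow_eq_one h
    rw [hx3] at this; omega
  have hy2ne1 : y ^ 2 ≠ 1 := by
    intro h
    have := orderOf_dvd_of_pow_eq_one h
    rw [hy3] at this; omega
  have hxney : x ≠ y := fun h => hyx (h ▸ Subgroup.mem_zpowers x)
  have hxney2 : x ≠ y ^ 2 := by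
    intro h
    exact hxy (by rw [h]; exact Subgroup.pow_mem _ (Subgroup.mem_zpowers _) 2)
  have hx2ney : x ^ 2 ≠ y := fun h =>
    hyx (h ▸ Subgroup.pow_mem _ (Subgroup.mem_zpowers _) 2)
  have hx2ney2 : x ^ 2 ≠ y ^ 2 := by
    intro h
    apply hxney
    rw [← hxss, h, hyss]
  have hy2inx : y ^ 2 ∉ Subgroup.zpowers x := by
    rw [mem_zpowers_ord3 hx3]
    rintro (h | h | h)
    · exact hy2ne1 h
    · exact hxney2 h.symm
    · exact hx2ney2 h.symm
  have hx2iny : x ^ 2 ∉ Subgroup.zpowers y := by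
    rw [mem_zpowers_ord3 hy3]
    rintro (h | h | h)
    · exact hx2ne1 h
    · exact hx2ney h
    · exact hx2ney2 h
  have hxnex2 : x ≠ x ^ 2 := by
    intro h
    apply hx1
    have : x * x = x * 1 := by rw [mul_one, ← pow_two, ← h]
    exact mul_left_cancel this
  have hyney2 : y ≠ y ^ 2 := by
    intro h
    apply hy1
    have : y * y = y * 1 := by rw [mul_one, ← pow_two, ← h]
    exact mul_left_cancel this
  -- zpowers of squares
  have hx23 : orderOf (x ^ 2) = 3 := hexp _ hx2ne1
  have hy23 : orderOf (y ^ 2) = 3 := hexp _ hy2ne1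
  have hxiny2 : x ∉ Subgroup.zpowers (y ^ 2) := by
    rw [mem_zpowers_ord3 hy23]
    rintro (h | h | h)
    · exact hx1 h
    · exact hxney2 h
    · rw [hyss] at h; exact hxney h
  have hyinx2 : y ∉ Subgroup.zpowers (x ^ 2) := by
    rw [mem_zpowers_ord3 hx23]
    rintro (h | h | h)
    · exact hy1 h
    · exact hx2ney h.symm
    · rw [hxss] at h; exact hxney h.symm
  have hx2iny2 : x ^ 2 ∉ Subgroup.zpowers (y ^ 2) := by
    rw [mem_zpowers_ord3 hy23]
    rintro (h | h | h)
    · exact hx2ne1 h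
    · exact hx2ney2 h
    · rw [hyss] at h; exact hx2ney h
  have hy2inx2 : y ^ 2 ∉ Subgroup.zpowers (x ^ 2) := by
    rw [mem_zpowers_ord3 hx23]
    rintro (h | h | h)
    · exact hy2ne1 h
    · exact hx2ney2 h.symm
    · rw [hxss] at h; exact hxney2 h.symm
  refine ⟨⟨x, hx1⟩, ⟨x ^ 2, hx2ne1⟩, ⟨y, hy1⟩, ⟨y ^ 2, hy2ne1⟩, ?_, ?_, ?_, ?_, ?_, ?_,
    ?_, ?_, ?_, ?_, ?_, ?_⟩
  · exact fun h => hxnex2 (congrArg Subtype.val h)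
  · exact fun h => hxney (congrArg Subtype.val h)
  · exact fun h => hxney2 (congrArg Subtype.val h)
  · exact fun h => hx2ney (congrArg Subtype.val h)
  · exact fun h => hx2ney2 (congrArg Subtype.val h)
  · exact fun h => hyney2 (congrArg Subtype.val h)
  · exact ⟨hxnex2, Or.inr (Subgroup.pow_mem _ (Subgroup.mem_zpowers _) 2)⟩
  · exact ⟨hyney2, Or.inr (Subgroup.pow_mem _ (Subgroup.mem_zpowers _) 2)⟩
  · rintro ⟨-, h | h⟩
    · exact hxy h
    · exact hyx h
  · rintro ⟨-, h | h⟩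
    · exact hxiny2 h
    · exact hy2inx h
  · rintro ⟨-, h | h⟩
    · exact hx2iny h
    · exact hyinx2 h
  · rintro ⟨-, h | h⟩
    · exact hx2iny2 h
    · exact hy2inx2 h
end

section
/- Let n ≥ 7. The power graph of the alternating group Aₙ contains an induced path on 5 vertices. Explicitly, for n = 7 the elements (1 2 3 4)(5 6), (1 3)(2 4), (1 3)(2 4)(5 6 7), (5 6 7), (1 2)(3 4)(5 6 7) form an induced P₅ in P(A₇). -/
open Equiv Equiv.Perm Subgroup

private lemma mem_zp {G : Type*} [Group G] {x y : G} (k : ℕ) (h : y ^ k = x) :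
    x ∈ Subgroup.zpowers y := h ▸ Subgroup.pow_mem _ (Subgroup.mem_zpowers y) k

private lemma not_mem_zp {G : Type*} [Group G] [Finite G] {x y : G} {m : ℕ}
    (hm : y ^ m = 1) (hm0 : 0 < m) (h : ∀ k < m, y ^ k ≠ x) : x ∉ Subgroup.zpowers y := by
  intro hx
  obtain ⟨k, hk⟩ := (Submonoid.mem_powers_iff x y).mp (mem_powers_iff_mem_zpowers.mpr hx)
  exact h (k % m) (Nat.mod_lt _ hm0) (by rw [← pow_eq_pow_mod k hm]; exact hk)

private lemma adj_map {G H : Type*} [Group G] [Group H] (f : G →* H)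
    (hf : Function.Injective f) {x y : G} :
    (powerGraph H).Adj (f x) (f y) ↔ (powerGraph G).Adj x y := by
  have key : ∀ u v : G, f u ∈ Subgroup.zpowers (f v) ↔ u ∈ Subgroup.zpowers v := by
    intro u v
    rw [Subgroup.mem_zpowers_iff, Subgroup.mem_zpowers_iff]
    constructor
    · rintro ⟨k, hk⟩
      exact ⟨k, hf (by rw [map_zpow]; exact hk)⟩
    · rintro ⟨k, hk⟩
      exact ⟨k, by rw [← map_zpow, hk]⟩
  constructor
  · rintro ⟨hne, h | h⟩
    · exact ⟨fun e => hne (congrArg f e), Or.inl ((key _ _).mp h)⟩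
    · exact ⟨fun e => hne (congrArg f e), Or.inr ((key _ _).mp h)⟩
  · rintro ⟨hne, h | h⟩
    · exact ⟨fun e => hne (hf e), Or.inl ((key _ _).mpr h)⟩
    · exact ⟨fun e => hne (hf e), Or.inr ((key _ _).mpr h)⟩

/- The five permutations in `Perm (Fin 7)`:
  pa = (0 1 2 3)(4 5), pb = (0 2)(1 3), pc = (0 2)(1 3)(4 5 6),
  pd = (4 5 6), pe = (0 1)(2 3)(4 5 6) -/
private def pa : Perm (Fin 7) := swap 0 1 * swap 1 2 * swap 2 3 * swap 4 5
private def pb : Perm (Fin 7) := swap 0 2 * swap 1 3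
private def pc : Perm (Fin 7) := swap 0 2 * swap 1 3 * swap 4 5 * swap 5 6
private def pd : Perm (Fin 7) := swap 4 5 * swap 5 6
private def pe : Perm (Fin 7) := swap 0 1 * swap 2 3 * swap 4 5 * swap 5 6

private lemma perm_adj :
    (powerGraph (Perm (Fin 7))).Adj pa pb ∧ (powerGraph (Perm (Fin 7))).Adj pb pc ∧
    (powerGraph (Perm (Fin 7))).Adj pc pd ∧ (powerGraph (Perm (Fin 7))).Adj pd pe := by
  refine ⟨⟨by decide, Or.inr (mem_zp 2 (by decide))⟩,
    ⟨by decide, Or.inl (mem_zp 3 (by decide))⟩,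
    ⟨by decide, Or.inr (mem_zp 4 (by decide))⟩,
    ⟨by decide, Or.inl (mem_zp 4 (by decide))⟩⟩

set_option maxRecDepth 10000 in
private lemma perm_nadj :
    ¬(powerGraph (Perm (Fin 7))).Adj pa pc ∧ ¬(powerGraph (Perm (Fin 7))).Adj pa pd ∧
    ¬(powerGraph (Perm (Fin 7))).Adj pa pe ∧ ¬(powerGraph (Perm (Fin 7))).Adj pb pd ∧
    ¬(powerGraph (Perm (Fin 7))).Adj pb pe ∧ ¬(powerGraph (Perm (Fin 7))).Adj pc pe := by
  refine ⟨?_, ?_, ?_, ?_, ?_, ?_⟩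
  · rintro ⟨-, h | h⟩
    · exact not_mem_zp (show pc ^ 6 = 1 by decide) (by norm_num) (by decide) h
    · exact not_mem_zp (show pa ^ 4 = 1 by decide) (by norm_num) (by decide) h
  · rintro ⟨-, h | h⟩
    · exact not_mem_zp (show pd ^ 3 = 1 by decide) (by norm_num) (by decide) h
    · exact not_mem_zp (show pa ^ 4 = 1 by decide) (by norm_num) (by decide) h
  · rintro ⟨-, h | h⟩
    · exact not_mem_zp (show pe ^ 6 = 1 by decide) (by norm_num) (by decide) h
    · exact not_mem_zp (show pa ^ 4 = 1 by decide) (by norm_num) (by decide) h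
  · rintro ⟨-, h | h⟩
    · exact not_mem_zp (show pd ^ 3 = 1 by decide) (by norm_num) (by decide) h
    · exact not_mem_zp (show pb ^ 2 = 1 by decide) (by norm_num) (by decide) h
  · rintro ⟨-, h | h⟩
    · exact not_mem_zp (show pe ^ 6 = 1 by decide) (by norm_num) (by decide) h
    · exact not_mem_zp (show pb ^ 2 = 1 by decide) (by norm_num) (by decide) h
  · rintro ⟨-, h | h⟩
    · exact not_mem_zp (show pe ^ 6 = 1 by decide) (by norm_num) (by decide) h
    · exact not_mem_zp (show pc ^ 6 = 1 by decide) (by norm_num) (by decide) h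

private def aA : alternatingGroup (Fin 7) := ⟨pa, by rw [Equiv.Perm.mem_alternatingGroup]; decide⟩
private def bA : alternatingGroup (Fin 7) := ⟨pb, by rw [Equiv.Perm.mem_alternatingGroup]; decide⟩
private def cA : alternatingGroup (Fin 7) := ⟨pc, by rw [Equiv.Perm.mem_alternatingGroup]; decide⟩
private def dA : alternatingGroup (Fin 7) := ⟨pd, by rw [Equiv.Perm.mem_alternatingGroup]; decide⟩
private def eA : alternatingGroup (Fin 7) := ⟨pe, by rw [Equiv.Perm.mem_alternatingGroup]; decide⟩

theorem alternating_hasInducedP5 (n : ℕ) (hn : 7 ≤ n) :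
    HasInducedP5 (powerGraph ↥(alternatingGroup (Fin n))) := by
  set emb : Fin 7 ↪ Fin n := Fin.castLEEmb hn with hemb
  have hsign : ∀ σ : Perm (Fin 7),
      Perm.sign (Equiv.Perm.viaEmbeddingHom emb σ) = Perm.sign σ := by
    intro σ
    rw [viaEmbeddingHom_apply, Equiv.Perm.viaEmbedding]
    exact @sign_extendDomain _ _ _ _ _ _ σ _ (fun a => Classical.propDecidable _) _
  have hmem : ∀ σ : alternatingGroup (Fin 7),
      Equiv.Perm.viaEmbeddingHom emb (((alternatingGroup (Fin 7)).subtype) σ) ∈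
        alternatingGroup (Fin n) := by
    intro σ
    rw [Equiv.Perm.mem_alternatingGroup, hsign]
    exact Equiv.Perm.mem_alternatingGroup.mp σ.2
  let F : alternatingGroup (Fin 7) →* alternatingGroup (Fin n) :=
    ((Equiv.Perm.viaEmbeddingHom emb).comp (alternatingGroup (Fin 7)).subtype).codRestrict
      (alternatingGroup (Fin n)) hmem
  have hFinj : Function.Injective F := fun x y h =>
    Subtype.ext (Equiv.Perm.viaEmbeddingHom_injective emb (congrArg Subtype.val h : _))
  have hsub : Function.Injective (alternatingGroup (Fin 7)).subtype := Subtype.val_injective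
  obtain ⟨e1, e2, e3, e4⟩ := perm_adj
  obtain ⟨m1, m2, m3, m4, m5, m6⟩ := perm_nadj
  have lift : ∀ x y : alternatingGroup (Fin 7),
      (powerGraph ↥(alternatingGroup (Fin n))).Adj (F x) (F y) ↔
        (powerGraph (Perm (Fin 7))).Adj (x : Perm (Fin 7)) (y : Perm (Fin 7)) := by
    intro x y
    rw [adj_map F hFinj, ← adj_map (alternatingGroup (Fin 7)).subtype hsub]
    rfl
  have hne : ∀ x y : alternatingGroup (Fin 7),
      (x : Perm (Fin 7)) ≠ (y : Perm (Fin 7)) → F x ≠ F y := fun x y h hF =>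
    h (congrArg Subtype.val (hFinj hF))
  refine ⟨F aA, F bA, F cA, F dA, F eA,
    hne _ _ (by decide), hne _ _ (by decide), hne _ _ (by decide), hne _ _ (by decide),
    hne _ _ (by decide), hne _ _ (by decide), hne _ _ (by decide), hne _ _ (by decide),
    hne _ _ (by decide), hne _ _ (by decide),
    (lift _ _).mpr e1, (lift _ _).mpr e2, (lift _ _).mpr e3, (lift _ _).mpr e4,
    fun h => m1 ((lift _ _).mp h), fun h => m2 ((lift _ _).mp h),
    fun h => m3 ((lift _ _).mp h), fun h => m4 ((lift _ _).mp h),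
    fun h => m5 ((lift _ _).mp h), fun h => m6 ((lift _ _).mp h)⟩
end
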